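/- Let A and B be self-adjoint linear operators on an n-dimensional complex inner product space, Ã = A + B, with eigenvalues λ₁ ≥ ⋯ ≥ λₙ, e₁ ≥ ⋯ ≥ eₙ, λ̃₁ ≥ ⋯ ≥ λ̃ₙ of A, B, Ã respectively. Then for any convex continuous function φ: ℝ → ℝ, ∑_{j=1}^n φ(λ̃_j − λ_j) ≤ ∑_{j=1}^n φ(e_j). -/

import Mathlib

open Matrix Finset

namespace KyFanAux

variable {n : ℕ}




lemma antitone_le_of_comp_perm {f g : Fin n → ℝ} (hf : Antitone f) (hg : Antitone g)
    (σ : Equiv.Perm (Fin n)) (h : ∀ j, f j = g (σ j)) : ∀ i, f i ≤ g i := by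
  intro i
  by_contra hlt
  push_neg at hlt
  have hmap : ∀ j : Fin n, j ≤ i → σ j < i := by
    intro j hj
    by_contra hge
    push_neg at hge
    have h1 : f i ≤ f j := hf hj
    have h2 : g (σ j) ≤ g i := hg hge
    rw [h j] at h1
    linarith
  have hcard : (Finset.Iic i).card ≤ (Finset.Iio i).card := by
    apply Finset.card_le_card_of_injOn σ
    · intro j hj
      exact Finset.mem_Iio.2 (hmap j (Finset.mem_Iic.1 hj))
    · exact σ.injective.injOn
  rw [Fin.card_Iic, Fin.card_Iio] at hcard
  omega

lemma antitone_eq_of_comp_perm {f g : Fin n → ℝ} (hf : Antitone f) (hg : Antitone g)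
    (σ : Equiv.Perm (Fin n)) (h : f = g ∘ σ) : f = g := by
  funext i
  refine le_antisymm (antitone_le_of_comp_perm hf hg σ (fun j => congrFun h j) i) ?_
  refine antitone_le_of_comp_perm hg hf σ⁻¹ (fun j => ?_) i
  have := congrFun h (σ⁻¹ j)
  simp at this
  exact this.symm

lemma exists_antitone_perm (f : Fin n → ℝ) :
    ∃ σ : Equiv.Perm (Fin n), Antitone (f ∘ σ) := by
  refine ⟨Tuple.sort (fun i => -f i), ?_⟩
  have hm := Tuple.monotone_sort (fun i => -f i)
  intro i j hij
  have := hm hij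
  simp only [Function.comp_apply] at this ⊢
  linarith

/-- Existence of a monotone subgradient for a convex function on ℝ. -/
lemma exists_subgradient (φ : ℝ → ℝ) (hφ : ConvexOn ℝ Set.univ φ) :
    ∃ s : ℝ → ℝ, Monotone s ∧ ∀ t y : ℝ, φ t + s t * (y - t) ≤ φ y := by
  set s : ℝ → ℝ := fun t => sSup ((fun u => (φ t - φ u) / (t - u)) '' Set.Iio t) with hs
  have hne : ∀ t : ℝ, ((fun u => (φ t - φ u) / (t - u)) '' Set.Iio t).Nonempty := by
    intro t; exact ⟨_, ⟨t - 1, by simp, rfl⟩⟩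
  have hslope : ∀ u t v : ℝ, u < t → t < v →
      (φ t - φ u) / (t - u) ≤ (φ v - φ t) / (v - t) := by
    intro u t v h1 h2
    exact hφ.slope_mono_adjacent (Set.mem_univ u) (Set.mem_univ v) h1 h2
  have hbdd : ∀ t v : ℝ, t < v →
      (φ v - φ t) / (v - t) ∈ upperBounds ((fun u => (φ t - φ u) / (t - u)) '' Set.Iio t) := by
    intro t v htv x hx
    obtain ⟨u, hu, rfl⟩ := hx
    exact hslope u t v hu htv
  have hub : ∀ t y : ℝ, t < y → s t ≤ (φ y - φ t) / (y - t) := by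
    intro t y hty
    exact csSup_le (hne t) (fun x hx => hbdd t y hty hx)
  have hlb : ∀ t y : ℝ, y < t → (φ t - φ y) / (t - y) ≤ s t := by
    intro t y hyt
    exact le_csSup ⟨_, hbdd t (t + 1) (by linarith)⟩ ⟨y, hyt, rfl⟩
  refine ⟨s, ?_, ?_⟩
  · intro t t' htt'
    rcases eq_or_lt_of_le htt' with rfl | hlt
    · exact le_rfl
    · apply csSup_le (hne t)
      intro x hx
      obtain ⟨u, hu, rfl⟩ := hx
      calc (φ t - φ u) / (t - u) ≤ (φ t' - φ t) / (t' - t) := hslope u t t' hu hlt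
        _ ≤ s t' := hlb t' t hlt
  · intro t y
    rcases lt_trichotomy y t with hyt | rfl | hty
    · have h1 := hlb t y hyt
      have h2 : (0:ℝ) < t - y := by linarith
      rw [div_le_iff₀ h2] at h1
      nlinarith
    · simp
    · have h1 := hub t y hty
      have h2 : (0:ℝ) < y - t := by linarith
      rw [le_div_iff₀ h2] at h1
      nlinarith

/-- Abel-summation style bound. -/
lemma abel_bound (s d : ℕ → ℝ) (hs : Antitone s) :
    ∀ N : ℕ, (∀ k ≤ N, ∑ i ∈ Finset.range k, d i ≤ 0) →
      ∑ i ∈ Finset.range N, s i * d i ≤ s N * ∑ i ∈ Finset.range N, d i := by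
  intro N
  induction N with
  | zero => simp
  | succ N ih =>
    intro hD
    have ih' := ih (fun k hk => hD k (by omega))
    have hDN : ∑ i ∈ Finset.range N, d i ≤ 0 := hD N (by omega)
    have hDN1 : ∑ i ∈ Finset.range (N+1), d i ≤ 0 := hD (N+1) le_rfl
    have hsN : s (N+1) ≤ s N := hs (by omega)
    rw [Finset.sum_range_succ] at hDN1
    have hmul : s N * (∑ i ∈ Finset.range N, d i + d N)
        ≤ s (N+1) * (∑ i ∈ Finset.range N, d i + d N) :=
      mul_le_mul_of_nonpos_right hsN hDN1
    rw [Finset.sum_range_succ, Finset.sum_range_succ]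
    nlinarith [ih', hDN, hDN1, hsN, hmul]

/-- Sum over an initial segment of `Fin n` as a filtered sum. -/
lemma sum_range_eq_filter (f : Fin n → ℝ) (g : ℕ → ℝ) (hg : ∀ i (h : i < n), g i = f ⟨i, h⟩) :
    ∀ k, k ≤ n → ∑ i ∈ Finset.range k, g i
      = ∑ j ∈ univ.filter (fun j : Fin n => (j : ℕ) < k), f j := by
  intro k
  induction k with
  | zero => simp
  | succ k ih =>
    intro hk
    have hkn : k < n := by omega
    have hins : univ.filter (fun j : Fin n => (j : ℕ) < k + 1)
        = insert ⟨k, hkn⟩ (univ.filter (fun j : Fin n => (j : ℕ) < k)) := by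
      ext j
      simp only [Finset.mem_filter, Finset.mem_univ, true_and, Finset.mem_insert, Fin.ext_iff]
      omega
    rw [Finset.sum_range_succ, ih (by omega), hg k hkn, hins,
      Finset.sum_insert (by simp)]
    ring

lemma filter_lt_n_eq_univ : univ.filter (fun j : Fin n => (j : ℕ) < n) = (univ : Finset (Fin n)) := by
  ext j; simp [j.isLt]

/-- Hardy–Littlewood–Pólya inequality, `Fin` version. -/
lemma hlp (φ : ℝ → ℝ) (hφ : ConvexOn ℝ Set.univ φ) (a b : Fin n → ℝ) (ha : Antitone a)
    (h1 : ∀ k : ℕ, k ≤ n → ∑ j ∈ univ.filter (fun j : Fin n => (j : ℕ) < k), a j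
      ≤ ∑ j ∈ univ.filter (fun j : Fin n => (j : ℕ) < k), b j)
    (h2 : ∑ j, a j = ∑ j, b j) :
    ∑ j, φ (a j) ≤ ∑ j, φ (b j) := by
  rcases Nat.eq_zero_or_pos n with rfl | hn
  · simp
  obtain ⟨s, hsm, hsub⟩ := exists_subgradient φ hφ
  -- ℕ-extensions
  set A : ℕ → ℝ := fun i => a ⟨min i (n-1), by omega⟩ with hA
  set D : ℕ → ℝ := fun i => if h : i < n then a ⟨i, h⟩ - b ⟨i, h⟩ else 0 with hD
  have hAi : ∀ i (h : i < n), A i = a ⟨i, h⟩ := by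
    intro i h
    simp only [hA]
    congr 1
    apply Fin.ext
    show min i (n-1) = i
    omega
  have hAanti : Antitone A := by
    intro i j hij
    exact ha (by simp [Fin.le_def]; omega)
  have hSanti : Antitone (fun i => s (A i)) := fun i j hij => hsm (hAanti hij)
  have hDk : ∀ k ≤ n, ∑ i ∈ Finset.range k, D i ≤ 0 := by
    intro k hk
    have ea : ∑ i ∈ Finset.range k, (fun i => if h : i < n then a ⟨i, h⟩ else 0) i
        = ∑ j ∈ univ.filter (fun j : Fin n => (j : ℕ) < k), a j :=
      sum_range_eq_filter a _ (fun i h => by simp [h]) k hk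
    have eb : ∑ i ∈ Finset.range k, (fun i => if h : i < n then b ⟨i, h⟩ else 0) i
        = ∑ j ∈ univ.filter (fun j : Fin n => (j : ℕ) < k), b j :=
      sum_range_eq_filter b _ (fun i h => by simp [h]) k hk
    have : ∑ i ∈ Finset.range k, D i
        = ∑ i ∈ Finset.range k, (fun i => if h : i < n then a ⟨i, h⟩ else 0) i
          - ∑ i ∈ Finset.range k, (fun i => if h : i < n then b ⟨i, h⟩ else 0) i := by
      rw [← Finset.sum_sub_distrib]
      apply Finset.sum_congr rfl
      intro i _
      simp only [hD]
      split <;> simp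
    rw [this, ea, eb, sub_nonpos]
    exact h1 k hk
  have hDn : ∑ i ∈ Finset.range n, D i = 0 := by
    have ea := sum_range_eq_filter a (fun i => if h : i < n then a ⟨i, h⟩ else 0)
      (fun i h => by simp [h]) n le_rfl
    have eb := sum_range_eq_filter b (fun i => if h : i < n then b ⟨i, h⟩ else 0)
      (fun i h => by simp [h]) n le_rfl
    have : ∑ i ∈ Finset.range n, D i
        = ∑ i ∈ Finset.range n, (fun i => if h : i < n then a ⟨i, h⟩ else 0) i
          - ∑ i ∈ Finset.range n, (fun i => if h : i < n then b ⟨i, h⟩ else 0) i := by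
      rw [← Finset.sum_sub_distrib]
      apply Finset.sum_congr rfl
      intro i _
      simp only [hD]
      split <;> simp
    rw [this, ea, eb, filter_lt_n_eq_univ, h2]
    ring
  -- main estimate
  have key : ∑ i ∈ Finset.range n, (φ (A i) - (if h : i < n then φ (b ⟨i, h⟩) else 0))
      ≤ ∑ i ∈ Finset.range n, s (A i) * D i := by
    apply Finset.sum_le_sum
    intro i hi
    have hin : i < n := Finset.mem_range.1 hi
    simp only [hD, hin, dif_pos, hAi i hin]
    have := hsub (a ⟨i, hin⟩) (b ⟨i, hin⟩)
    nlinarith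
  have habel := abel_bound (fun i => s (A i)) D hSanti n hDk
  rw [hDn, mul_zero] at habel
  have ephia := sum_range_eq_filter (fun j => φ (a j)) (fun i => if h : i < n then φ (a ⟨i,h⟩) else 0)
      (fun i h => by simp [h]) n le_rfl
  have ephib := sum_range_eq_filter (fun j => φ (b j)) (fun i => if h : i < n then φ (b ⟨i,h⟩) else 0)
      (fun i h => by simp [h]) n le_rfl
  rw [filter_lt_n_eq_univ] at ephia ephib
  have expand : ∑ i ∈ Finset.range n, (φ (A i) - (if h : i < n then φ (b ⟨i, h⟩) else 0))
      = ∑ j, φ (a j) - ∑ j, φ (b j) := by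
    rw [Finset.sum_sub_distrib, ← ephia, ← ephib]
    congr 1
    apply Finset.sum_congr rfl
    intro i hi
    have hin : i < n := Finset.mem_range.1 hi
    simp [hAi i hin, hin]
  linarith [key, habel, expand.symm.le, expand.le]





lemma sum_sq_repr (w : OrthonormalBasis (Fin n) ℂ (EuclideanSpace ℂ (Fin n)))
    (x : EuclideanSpace ℂ (Fin n)) : ∑ j, ‖w.repr x j‖ ^ 2 = ‖x‖ ^ 2 := by
  have h1 : ‖w.repr x‖ = ‖x‖ := w.repr.norm_map x
  have h2 : ‖w.repr x‖ ^ 2 = ∑ j, ‖w.repr x j‖ ^ 2 := by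
    rw [EuclideanSpace.norm_eq, Real.sq_sqrt (by positivity)]
  rw [← h2, h1]

/-- Rayleigh quotient expansion for an operator acting diagonally on an orthonormal basis. -/
lemma rayleigh_eq (T : EuclideanSpace ℂ (Fin n) →ₗ[ℂ] EuclideanSpace ℂ (Fin n))
    (w : OrthonormalBasis (Fin n) ℂ (EuclideanSpace ℂ (Fin n))) (d : Fin n → ℝ)
    (hT : ∀ j, T (w j) = (d j : ℂ) • w j) (x : EuclideanSpace ℂ (Fin n)) :
    (inner ℂ x (T x) : ℂ).re = ∑ j, d j * ‖w.repr x j‖ ^ 2 := by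
  have hTx : T x = ∑ j, ((d j : ℂ) * w.repr x j) • w j := by
    conv_lhs => rw [← w.sum_repr x]
    rw [map_sum]
    apply Finset.sum_congr rfl
    intro j _
    rw [LinearMap.map_smul, hT j, smul_smul, mul_comm]
  have hinner : (inner ℂ x (T x) : ℂ)
      = ∑ j, ((d j : ℂ) * w.repr x j) * (starRingEnd ℂ) (w.repr x j) := by
    rw [hTx, inner_sum]
    apply Finset.sum_congr rfl
    intro j _
    rw [inner_smul_right]
    have hxw : (inner ℂ x (w j) : ℂ) = (starRingEnd ℂ) (w.repr x j) := by
      rw [w.repr_apply_apply, ← inner_conj_symm]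
    rw [hxw]
  rw [hinner, Complex.re_sum]
  apply Finset.sum_congr rfl
  intro j _
  have hterm : (d j : ℂ) * w.repr x j * (starRingEnd ℂ) (w.repr x j)
      = ((d j * ‖w.repr x j‖ ^ 2 : ℝ) : ℂ) := by
    rw [mul_assoc, Complex.mul_conj']
    push_cast
    ring
  rw [hterm, Complex.ofReal_re]

/-- Coordinates vanish outside the index set of a span. -/
lemma repr_eq_zero_of_mem_span (w : OrthonormalBasis (Fin n) ℂ (EuclideanSpace ℂ (Fin n)))
    (S : Set (Fin n)) (x : EuclideanSpace ℂ (Fin n))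
    (hx : x ∈ Submodule.span ℂ (w '' S)) (k : Fin n) (hk : k ∉ S) : w.repr x k = 0 := by
  rw [w.repr_apply_apply]
  induction hx using Submodule.span_induction with
  | mem y hy =>
    obtain ⟨j, hj, rfl⟩ := hy
    exact w.orthonormal.2 (fun h => hk (h ▸ hj))
  | zero => simp
  | add y z _ _ hy hz => rw [inner_add_right, hy, hz, add_zero]
  | smul c y _ hy => rw [inner_smul_right, hy, mul_zero]

/-- Dimension of the span of part of an orthonormal basis. -/
lemma finrank_span_image (w : OrthonormalBasis (Fin n) ℂ (EuclideanSpace ℂ (Fin n)))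
    (S : Set (Fin n)) [Fintype S] :
    Module.finrank ℂ (Submodule.span ℂ (w '' S)) = Fintype.card S := by
  have h1 : w '' S = Set.range (fun j : S => w (j : Fin n)) := by
    rw [← Set.image_eq_range]
  rw [h1]
  exact finrank_span_eq_card ((w.orthonormal.comp _ Subtype.val_injective).linearIndependent)

/-- Abstract Weyl-type comparison (Courant–Fischer argument). -/
lemma weyl_core (T S : EuclideanSpace ℂ (Fin n) →ₗ[ℂ] EuclideanSpace ℂ (Fin n))
    (wT wS : OrthonormalBasis (Fin n) ℂ (EuclideanSpace ℂ (Fin n)))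
    (μ ν : Fin n → ℝ) (hμ : Antitone μ) (hν : Antitone ν)
    (hTd : ∀ j, T (wT j) = (μ j : ℂ) • wT j) (hSd : ∀ j, S (wS j) = (ν j : ℂ) • wS j)
    (c : ℝ)
    (h : ∀ x : EuclideanSpace ℂ (Fin n), ‖x‖ = 1 →
      (inner ℂ x (T x) : ℂ).re ≤ (inner ℂ x (S x) : ℂ).re + c)
    (i : Fin n) : μ i ≤ ν i + c := by
  classical
  set V := Submodule.span ℂ (wT '' ↑(Finset.Iic i)) with hV
  set W := Submodule.span ℂ (wS '' ↑(Finset.Ici i)) with hW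
  have hVrank : Module.finrank ℂ V = (i : ℕ) + 1 := by
    rw [hV, finrank_span_image]
    simp [Fin.card_Iic]
  have hWrank : Module.finrank ℂ W = n - (i : ℕ) := by
    rw [hW, finrank_span_image]
    simp [Fin.card_Ici]
  -- the intersection is nontrivial
  have hdim : 0 < Module.finrank ℂ (V ⊓ W : Submodule ℂ (EuclideanSpace ℂ (Fin n))) := by
    have hsum := Submodule.finrank_sup_add_finrank_inf_eq V W
    have hle : Module.finrank ℂ (V ⊔ W : Submodule ℂ (EuclideanSpace ℂ (Fin n)))
        ≤ Module.finrank ℂ (EuclideanSpace ℂ (Fin n)) := Submodule.finrank_le _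
    rw [finrank_euclideanSpace_fin] at hle
    rw [hVrank, hWrank] at hsum
    have hi : (i : ℕ) < n := i.isLt
    omega
  haveI hnt : Nontrivial (↥(V ⊓ W)) := Module.finrank_pos_iff.1 hdim
  obtain ⟨⟨z, hz⟩, hzne⟩ := exists_ne (0 : ↥(V ⊓ W))
  have hz0 : z ≠ 0 := by
    intro h0
    apply hzne
    exact Subtype.ext h0
  set x : EuclideanSpace ℂ (Fin n) := ((‖z‖ : ℂ))⁻¹ • z with hx
  have hxnorm : ‖x‖ = 1 := norm_smul_inv_norm hz0
  have hxV : x ∈ V := Submodule.smul_mem _ _ (Submodule.mem_inf.1 hz).1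
  have hxW : x ∈ W := Submodule.smul_mem _ _ (Submodule.mem_inf.1 hz).2
  have hsum1 : ∑ j, ‖wT.repr x j‖ ^ 2 = 1 := by
    rw [sum_sq_repr, hxnorm]; norm_num
  have hsum2 : ∑ j, ‖wS.repr x j‖ ^ 2 = 1 := by
    rw [sum_sq_repr, hxnorm]; norm_num
  -- lower bound for T
  have hlow : μ i ≤ (inner ℂ x (T x) : ℂ).re := by
    rw [rayleigh_eq T wT μ hTd x]
    have hge : μ i = ∑ j, μ i * ‖wT.repr x j‖ ^ 2 := by
      rw [← Finset.mul_sum, hsum1, mul_one]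
    rw [hge]
    apply Finset.sum_le_sum
    intro j _
    rcases le_or_gt j i with hj | hj
    · exact mul_le_mul_of_nonneg_right (hμ hj) (by positivity)
    · have hrz : wT.repr x j = 0 := by
        apply repr_eq_zero_of_mem_span wT _ x hxV j
        simpa using hj.not_ge
      simp [hrz]
  have hhigh : (inner ℂ x (S x) : ℂ).re ≤ ν i := by
    rw [rayleigh_eq S wS ν hSd x]
    have hge : ν i = ∑ j, ν i * ‖wS.repr x j‖ ^ 2 := by
      rw [← Finset.mul_sum, hsum2, mul_one]
    rw [hge]
    apply Finset.sum_le_sum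
    intro j _
    rcases lt_or_ge j i with hj | hj
    · have hrz : wS.repr x j = 0 := by
        apply repr_eq_zero_of_mem_span wS _ x hxW j
        simpa using hj.not_ge
      simp [hrz]
    · exact mul_le_mul_of_nonneg_right (hν hj) (by positivity)
  have := h x hxnorm
  linarith





lemma toEuclideanLin_apply' (X : Matrix (Fin n) (Fin n) ℂ) (x : EuclideanSpace ℂ (Fin n)) :
    Matrix.toEuclideanLin X x = X *ᵥ x := rfl

lemma diag_action {X : Matrix (Fin n) (Fin n) ℂ} (hX : X.IsHermitian) (j : Fin n) :
    Matrix.toEuclideanLin X (hX.eigenvectorBasis j)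
      = ((hX.eigenvalues j : ℝ) : ℂ) • hX.eigenvectorBasis j := by
  have h2 : X *ᵥ ⇑(hX.eigenvectorBasis j) = hX.eigenvalues j • ⇑(hX.eigenvectorBasis j) :=
    hX.mulVec_eigenvectorBasis j
  apply WithLp.ofLp_injective
  rw [toEuclideanLin_apply']
  funext i
  have := congrFun h2 i
  simpa [Complex.real_smul] using this

lemma re_trace_eq_sum {X : Matrix (Fin n) (Fin n) ℂ} (hX : X.IsHermitian) :
    (X.trace).re = ∑ j, hX.eigenvalues j := by
  conv_lhs => rw [hX.spectral_theorem]
  rw [Unitary.conjStarAlgAut_apply, Matrix.trace_mul_cycle, Matrix.UnitaryGroup.star_mul_self, one_mul, Matrix.trace_diagonal]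
  rw [Complex.re_sum]
  apply Finset.sum_congr rfl
  intro j _
  simp

lemma card_filter_lt (k : ℕ) (hk : k ≤ n) :
    (univ.filter (fun j : Fin n => (j : ℕ) < k)).card = k := by
  induction k with
  | zero => simp
  | succ k ih =>
    have hkn : k < n := by omega
    have hins : univ.filter (fun j : Fin n => (j : ℕ) < k + 1)
        = insert ⟨k, hkn⟩ (univ.filter (fun j : Fin n => (j : ℕ) < k)) := by
      ext j
      simp only [Finset.mem_filter, Finset.mem_univ, true_and, Finset.mem_insert, Fin.ext_iff]
      omega
    rw [hins, Finset.card_insert_of_notMem (by simp), ih (by omega)]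






lemma lidskii_subset {A B : Matrix (Fin n) (Fin n) ℂ}
    (hA : A.IsHermitian) (hB : B.IsHermitian) (hT : (A + B).IsHermitian)
    {lam e lamt : Fin n → ℝ}
    (hlam : Antitone lam) (he : Antitone e) (hlamt : Antitone lamt)
    (σA σB σT : Equiv.Perm (Fin n))
    (hlam' : lam = hA.eigenvalues ∘ σA) (he' : e = hB.eigenvalues ∘ σB)
    (hlamt' : lamt = hT.eigenvalues ∘ σT) (J : Finset (Fin n)) :
    ∑ j ∈ J, (lamt j - lam j)
      ≤ ∑ j ∈ univ.filter (fun j : Fin n => (j : ℕ) < J.card), e j := by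
  classical
  rcases Nat.eq_zero_or_pos J.card with hJ0 | hJpos
  · rw [Finset.card_eq_zero.1 hJ0]
    simp [Finset.card_eq_zero.1 hJ0]
  set k := J.card with hk
  have hkn : k ≤ n := by simpa using Finset.card_le_univ J
  set c := e ⟨k - 1, by omega⟩ with hc
  set d : Fin n → ℝ := fun i => max (hB.eigenvalues i - c) 0 with hd
  set P : Matrix (Fin n) (Fin n) ℂ :=
    (hB.eigenvectorUnitary : Matrix (Fin n) (Fin n) ℂ)
      * Matrix.diagonal (fun i => ((d i : ℝ) : ℂ))
      * star (hB.eigenvectorUnitary : Matrix (Fin n) (Fin n) ℂ) with hPdef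
  have hDherm : (Matrix.diagonal (fun i => ((d i : ℝ) : ℂ))).IsHermitian := by
    rw [Matrix.isHermitian_diagonal_iff]
    intro i
    exact Complex.conj_ofReal _
  have hP : P.IsHermitian := by
    rw [hPdef, Matrix.star_eq_conjTranspose]
    exact Matrix.isHermitian_mul_mul_conjTranspose _ hDherm
  have hAP : (A + P).IsHermitian := hA.add hP
  obtain ⟨τ, hτ⟩ := exists_antitone_perm hAP.eigenvalues
  set ν : Fin n → ℝ := hAP.eigenvalues ∘ τ with hν
  have hνa : Antitone ν := hτ
  -- P acts diagonally on B's eigenbasis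
  have hPdiag0 : ∀ j, P *ᵥ ⇑(hB.eigenvectorBasis j)
      = ((d j : ℝ) : ℂ) • ⇑(hB.eigenvectorBasis j) := by
    intro j
    have h1 : star (hB.eigenvectorUnitary : Matrix (Fin n) (Fin n) ℂ) *ᵥ ⇑(hB.eigenvectorBasis j)
        = Pi.single j 1 := hB.star_eigenvectorUnitary_mulVec j
    have h2 : (hB.eigenvectorUnitary : Matrix (Fin n) (Fin n) ℂ) *ᵥ Pi.single j 1
        = ⇑(hB.eigenvectorBasis j) := hB.eigenvectorUnitary_mulVec j
    have h3 : (Pi.single j ((d j : ℝ) : ℂ) : Fin n → ℂ)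
        = ((d j : ℝ) : ℂ) • (Pi.single j 1 : Fin n → ℂ) := by
      funext i
      simp [Pi.single_apply, mul_ite]
    rw [hPdef, ← Matrix.mulVec_mulVec, ← Matrix.mulVec_mulVec, h1,
      Matrix.diagonal_mulVec_single, mul_one, h3, Matrix.mulVec_smul, h2]
  have hPdiag : ∀ j, Matrix.toEuclideanLin P (hB.eigenvectorBasis j)
      = ((d j : ℝ) : ℂ) • hB.eigenvectorBasis j := by
    intro j
    apply WithLp.ofLp_injective
    exact hPdiag0 j
  -- quadratic form additivity
  have qsum : ∀ (X Y : Matrix (Fin n) (Fin n) ℂ) (x : EuclideanSpace ℂ (Fin n)),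
      (inner ℂ x (Matrix.toEuclideanLin (X + Y) x) : ℂ).re
        = (inner ℂ x (Matrix.toEuclideanLin X x) : ℂ).re
          + (inner ℂ x (Matrix.toEuclideanLin Y x) : ℂ).re := by
    intro X Y x
    rw [map_add, LinearMap.add_apply, inner_add_right, Complex.add_re]
  -- diagonal actions on reindexed bases
  have hTdiag : ∀ j, Matrix.toEuclideanLin (A + B) ((hT.eigenvectorBasis.reindex σT.symm) j)
      = ((lamt j : ℝ) : ℂ) • (hT.eigenvectorBasis.reindex σT.symm) j := by
    intro j
    rw [OrthonormalBasis.reindex_apply, Equiv.symm_symm, diag_action hT, hlamt']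
    rfl
  have hAdiag : ∀ j, Matrix.toEuclideanLin A ((hA.eigenvectorBasis.reindex σA.symm) j)
      = ((lam j : ℝ) : ℂ) • (hA.eigenvectorBasis.reindex σA.symm) j := by
    intro j
    rw [OrthonormalBasis.reindex_apply, Equiv.symm_symm, diag_action hA, hlam']
    rfl
  have hAPdiag : ∀ j, Matrix.toEuclideanLin (A + P) ((hAP.eigenvectorBasis.reindex τ.symm) j)
      = ((ν j : ℝ) : ℂ) • (hAP.eigenvectorBasis.reindex τ.symm) j := by
    intro j
    rw [OrthonormalBasis.reindex_apply, Equiv.symm_symm, diag_action hAP, hν]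
    rfl
  -- first comparison : A + B versus A + P with shift c
  have hcomp1 : ∀ x : EuclideanSpace ℂ (Fin n), ‖x‖ = 1 →
      (inner ℂ x (Matrix.toEuclideanLin (A + B) x) : ℂ).re
        ≤ (inner ℂ x (Matrix.toEuclideanLin (A + P) x) : ℂ).re + c := by
    intro x hx
    rw [qsum A B x, qsum A P x]
    have hB1 := rayleigh_eq (Matrix.toEuclideanLin B) hB.eigenvectorBasis hB.eigenvalues
      (fun j => diag_action hB j) x
    have hP1 := rayleigh_eq (Matrix.toEuclideanLin P) hB.eigenvectorBasis d hPdiag x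
    rw [hB1, hP1]
    have hsum1 : ∑ j, ‖hB.eigenvectorBasis.repr x j‖ ^ 2 = 1 := by
      rw [sum_sq_repr, hx]
      norm_num
    have step : ∑ j, hB.eigenvalues j * ‖hB.eigenvectorBasis.repr x j‖ ^ 2
        ≤ ∑ j, (d j + c) * ‖hB.eigenvectorBasis.repr x j‖ ^ 2 := by
      apply Finset.sum_le_sum
      intro j _
      apply mul_le_mul_of_nonneg_right _ (by positivity)
      have hmax : hB.eigenvalues j - c ≤ d j := le_max_left _ _
      linarith
    have expand : ∑ j, (d j + c) * ‖hB.eigenvectorBasis.repr x j‖ ^ 2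
        = ∑ j, d j * ‖hB.eigenvectorBasis.repr x j‖ ^ 2
          + c * ∑ j, ‖hB.eigenvectorBasis.repr x j‖ ^ 2 := by
      rw [Finset.mul_sum, ← Finset.sum_add_distrib]
      apply Finset.sum_congr rfl
      intro j _
      ring
    rw [expand, hsum1, mul_one] at step
    linarith
  have weyl1 : ∀ j, lamt j ≤ ν j + c := by
    intro j
    exact weyl_core (Matrix.toEuclideanLin (A + B)) (Matrix.toEuclideanLin (A + P))
      (hT.eigenvectorBasis.reindex σT.symm) (hAP.eigenvectorBasis.reindex τ.symm)
      lamt ν hlamt hνa hTdiag hAPdiag c hcomp1 j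
  -- second comparison : A versus A + P
  have hcomp2 : ∀ x : EuclideanSpace ℂ (Fin n), ‖x‖ = 1 →
      (inner ℂ x (Matrix.toEuclideanLin A x) : ℂ).re
        ≤ (inner ℂ x (Matrix.toEuclideanLin (A + P) x) : ℂ).re + 0 := by
    intro x hx
    rw [qsum A P x]
    have hP1 := rayleigh_eq (Matrix.toEuclideanLin P) hB.eigenvectorBasis d hPdiag x
    have hPnn : 0 ≤ (inner ℂ x (Matrix.toEuclideanLin P x) : ℂ).re := by
      rw [hP1]
      apply Finset.sum_nonneg
      intro j _
      have : (0:ℝ) ≤ d j := le_max_right _ _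
      positivity
    linarith
  have weyl2 : ∀ j, lam j ≤ ν j := by
    intro j
    have := weyl_core (Matrix.toEuclideanLin A) (Matrix.toEuclideanLin (A + P))
      (hA.eigenvectorBasis.reindex σA.symm) (hAP.eigenvectorBasis.reindex τ.symm)
      lam ν hlam hνa hAdiag hAPdiag 0 hcomp2 j
    linarith
  -- trace identities
  have htrP : (P.trace).re = ∑ j, d j := by
    have h5 : P.trace = (Matrix.diagonal (fun i => ((d i : ℝ) : ℂ))).trace := by
      rw [hPdef, Matrix.trace_mul_cycle, Matrix.UnitaryGroup.star_mul_self, one_mul]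
    rw [h5, Matrix.trace_diagonal, Complex.re_sum]
    apply Finset.sum_congr rfl
    intro j _
    simp
  have hsum_lam : ∑ j, lam j = (A.trace).re := by
    rw [hlam', re_trace_eq_sum hA]
    exact Equiv.sum_comp σA hA.eigenvalues
  have hsum_nu : ∑ j, ν j = ((A + P).trace).re := by
    rw [hν, re_trace_eq_sum hAP]
    exact Equiv.sum_comp τ hAP.eigenvalues
  have htr : ∑ j, ν j - ∑ j, lam j = ∑ j, d j := by
    rw [hsum_nu, hsum_lam, Matrix.trace_add, Complex.add_re, htrP]
    ring
  -- computing the sum of d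
  have hde : ∑ j, d j = ∑ j, max (e j - c) 0 := by
    rw [he']
    exact (Equiv.sum_comp σB (fun i => max (hB.eigenvalues i - c) 0)).symm
  have hsplit : ∑ j, max (e j - c) 0
      = ∑ j ∈ univ.filter (fun j : Fin n => (j : ℕ) < k), (e j - c) := by
    rw [← Finset.sum_filter_add_sum_filter_not univ (fun j : Fin n => (j : ℕ) < k)
      (fun j => max (e j - c) 0)]
    have hz : ∑ j ∈ univ.filter (fun j : Fin n => ¬ (j : ℕ) < k), max (e j - c) 0 = 0 := by
      apply Finset.sum_eq_zero
      intro j hj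
      have hjk : ¬ (j : ℕ) < k := (Finset.mem_filter.1 hj).2
      have hle : (⟨k - 1, by omega⟩ : Fin n) ≤ j := by
        rw [Fin.le_def]
        simp only []
        omega
      have : e j ≤ c := he hle
      rw [max_eq_right (by linarith)]
    rw [hz, add_zero]
    apply Finset.sum_congr rfl
    intro j hj
    have hjk : (j : ℕ) < k := (Finset.mem_filter.1 hj).2
    have hle : j ≤ (⟨k - 1, by omega⟩ : Fin n) := by
      rw [Fin.le_def]
      simp only []
      omega
    have : c ≤ e j := he hle
    rw [max_eq_left (by linarith)]
  have hcard : (univ.filter (fun j : Fin n => (j : ℕ) < k)).card = k := card_filter_lt k hkn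
  have hdsum : ∑ j, d j
      = ∑ j ∈ univ.filter (fun j : Fin n => (j : ℕ) < k), e j - (k : ℝ) * c := by
    rw [hde, hsplit, Finset.sum_sub_distrib, Finset.sum_const, hcard, nsmul_eq_mul]
  -- final chain
  have chain1 : ∑ j ∈ J, (lamt j - lam j) ≤ ∑ j ∈ J, (ν j - lam j) + (k : ℝ) * c := by
    have : ∑ j ∈ J, (lamt j - lam j) ≤ ∑ j ∈ J, ((ν j - lam j) + c) := by
      apply Finset.sum_le_sum
      intro j _
      have := weyl1 j
      linarith
    rw [Finset.sum_add_distrib, Finset.sum_const, nsmul_eq_mul, ← hk] at this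
    exact this
  have chain2 : ∑ j ∈ J, (ν j - lam j) ≤ ∑ j, (ν j - lam j) := by
    apply Finset.sum_le_sum_of_subset_of_nonneg (Finset.subset_univ J)
    intro j _ _
    have := weyl2 j
    linarith
  have chain3 : ∑ j, (ν j - lam j) = ∑ j, d j := by
    rw [Finset.sum_sub_distrib]
    exact htr
  calc ∑ j ∈ J, (lamt j - lam j)
      ≤ ∑ j ∈ J, (ν j - lam j) + (k : ℝ) * c := chain1
    _ ≤ ∑ j, (ν j - lam j) + (k : ℝ) * c := by linarith
    _ = ∑ j, d j + (k : ℝ) * c := by rw [chain3]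
    _ = ∑ j ∈ univ.filter (fun j : Fin n => (j : ℕ) < k), e j := by
        rw [hdsum]
        ring


end KyFanAux

open KyFanAux in
/-- Ky Fan (Lidskii–Wielandt) majorization inequality: if `A`, `B` are Hermitian and
`Ã = A + B`, with eigenvalues `lam`, `e`, `lamt` respectively, listed in nonincreasing
order with multiplicity, then for any convex continuous `φ : ℝ → ℝ`,
`∑ φ(lamt j - lam j) ≤ ∑ φ(e j)`. -/
theorem stmt3 (n : ℕ) (A B : Matrix (Fin n) (Fin n) ℂ)
    (hA : A.IsHermitian) (hB : B.IsHermitian) (hT : (A + B).IsHermitian)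
    (lam e lamt : Fin n → ℝ)
    (hlam : Antitone lam) (he : Antitone e) (hlamt : Antitone lamt)
    (hlam' : ∃ σ : Equiv.Perm (Fin n), lam = hA.eigenvalues ∘ σ)
    (he' : ∃ σ : Equiv.Perm (Fin n), e = hB.eigenvalues ∘ σ)
    (hlamt' : ∃ σ : Equiv.Perm (Fin n), lamt = hT.eigenvalues ∘ σ)
    (φ : ℝ → ℝ) (hφ : ConvexOn ℝ Set.univ φ) (hφc : Continuous φ) :
    ∑ j, φ (lamt j - lam j) ≤ ∑ j, φ (e j) := by
  classical
  obtain ⟨σA, hlamA⟩ := hlam'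
  obtain ⟨σB, heB⟩ := he'
  obtain ⟨σT, hlamT⟩ := hlamt'
  obtain ⟨ρ, hρ⟩ := exists_antitone_perm (fun j => lamt j - lam j)
  have h1 : ∀ k : ℕ, k ≤ n →
      ∑ j ∈ univ.filter (fun j : Fin n => (j : ℕ) < k), ((fun j => lamt j - lam j) ∘ ρ) j
        ≤ ∑ j ∈ univ.filter (fun j : Fin n => (j : ℕ) < k), e j := by
    intro k hkn
    set Jk := (univ.filter (fun j : Fin n => (j : ℕ) < k)).image ρ with hJk
    have hcard : Jk.card = k := by
      rw [hJk, Finset.card_image_of_injective _ ρ.injective, card_filter_lt k hkn]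
    have hsum : ∑ j ∈ univ.filter (fun j : Fin n => (j : ℕ) < k), ((fun j => lamt j - lam j) ∘ ρ) j
        = ∑ j ∈ Jk, (lamt j - lam j) := by
      rw [hJk, Finset.sum_image (fun x _ y _ h => ρ.injective h)]
      rfl
    have hlid := lidskii_subset hA hB hT hlam he hlamt σA σB σT hlamA heB hlamT Jk
    rw [hcard] at hlid
    rw [hsum]
    exact hlid
  have h2 : ∑ j, ((fun j => lamt j - lam j) ∘ ρ) j = ∑ j, e j := by
    have e1 : ∑ j, ((fun j => lamt j - lam j) ∘ ρ) j = ∑ j, (lamt j - lam j) :=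
      Equiv.sum_comp ρ (fun j => lamt j - lam j)
    have e2 : ∑ j, lamt j = ((A + B).trace).re := by
      rw [hlamT, re_trace_eq_sum hT]
      exact Equiv.sum_comp σT hT.eigenvalues
    have e3 : ∑ j, lam j = (A.trace).re := by
      rw [hlamA, re_trace_eq_sum hA]
      exact Equiv.sum_comp σA hA.eigenvalues
    have e4 : ∑ j, e j = (B.trace).re := by
      rw [heB, re_trace_eq_sum hB]
      exact Equiv.sum_comp σB hB.eigenvalues
    rw [e1, Finset.sum_sub_distrib, e2, e3, e4, Matrix.trace_add, Complex.add_re]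
    ring
  have hmain := hlp φ hφ ((fun j => lamt j - lam j) ∘ ρ) e hρ h1 h2
  have e5 : ∑ j, φ (((fun j => lamt j - lam j) ∘ ρ) j) = ∑ j, φ (lamt j - lam j) :=
    Equiv.sum_comp ρ (fun j => φ (lamt j - lam j))
  rw [e5] at hmain
  exact hmain
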